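/- Let (r_k) be a non-increasing sequence of positive real numbers converging to 0, let α > 1 and β > 0, and suppose there exists N ∈ ℕ such that r_{k+1}^α ≤ β(r_k − r_{k+1}) for all k ≥ N. Then (r_k) converges sublinearly to 0 with rate O(k^{1/(1−α)}): there exist a constant c > 0 and N′ ∈ ℕ such that r_k ≤ c·k^{1/(1−α)} for all k ≥ N′. -/
import Mathlib


open Filter Topology

/-- Tangent-line / MVT inequality: for `0 < a ≤ b` and `α > 1`,
`a ^ (1-α) - b ^ (1-α) ≥ (α-1) * b ^ (-α) * (b - a)`. -/
lemma aux_mvt {a b α : ℝ} (ha : 0 < a) (hab : a ≤ b) (hα : 1 < α) :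
    (α - 1) * b ^ (-α) * (b - a) ≤ a ^ (1 - α) - b ^ (1 - α) := by
  rcases eq_or_lt_of_le hab with h | h
  · subst h; simp
  · have hb : 0 < b := ha.trans h
    obtain ⟨c, hc, hceq⟩ := exists_hasDerivAt_eq_slope (fun x => x ^ (1 - α))
      (fun x => (1 - α) * x ^ (1 - α - 1)) h
      (by
        intro x hx
        have hx0 : 0 < x := lt_of_lt_of_le ha hx.1
        exact (Real.continuousAt_rpow_const x (1 - α) (Or.inl hx0.ne')).continuousWithinAt)
      (by
        intro x hx
        have hx0 : 0 < x := ha.trans hx.1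
        exact Real.hasDerivAt_rpow_const (Or.inl hx0.ne'))
    have hc0 : 0 < c := ha.trans hc.1
    have hcb : c ≤ b := hc.2.le
    have hba : 0 < b - a := by linarith
    have hexp : (1 : ℝ) - α - 1 = -α := by ring
    rw [hexp] at hceq
    have hkey : b ^ (1 - α) - a ^ (1 - α) = (1 - α) * c ^ (-α) * (b - a) := by
      rw [hceq]; field_simp
    have hmon : b ^ (-α) ≤ c ^ (-α) :=
      Real.rpow_le_rpow_of_nonpos hc0 hcb (by linarith)
    nlinarith [mul_le_mul_of_nonneg_left (mul_le_mul_of_nonneg_right hmon hba.le)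
      (by linarith : (0:ℝ) ≤ α - 1)]

/-- Lemma on convergence rates (`r_{k+1}^α ≤ β(r_k − r_{k+1})`),
case `α > 1`: sublinear convergence `O(k^{1/(1−α)})`. -/
theorem stmt_11
    (r : ℕ → ℝ) (hmono : ∀ k, r (k + 1) ≤ r k) (hpos : ∀ k, 0 < r k)
    (hto0 : Tendsto r atTop (𝓝 0))
    (α β : ℝ) (hα : 1 < α) (hβ : 0 < β)
    (N : ℕ) (hrec : ∀ k, N ≤ k → r (k + 1) ^ α ≤ β * (r k - r (k + 1))) :
    ∃ c > 0, ∃ N' : ℕ, ∀ k, N' ≤ k → r k ≤ c * (k : ℝ) ^ (1 / (1 - α)) := by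
  have hα1 : (0:ℝ) < α - 1 := by linarith
  have hmono' : ∀ m n : ℕ, m ≤ n → r n ≤ r m := fun m n h =>
    antitone_nat_of_succ_le hmono h
  have h2a : (0:ℝ) < 2 ^ (-α) := Real.rpow_pos_of_pos (by norm_num) _
  have h2a1 : (1:ℝ) < 2 ^ (α-1) :=
    Real.one_lt_rpow_iff_of_pos (by norm_num) |>.2 (Or.inl ⟨by norm_num, by linarith⟩)
  set γ : ℝ := min ((α-1) * 2 ^ (-α) / β) ((2 ^ (α-1) - 1) * r N ^ (1-α)) with hγdef
  have hγpos : 0 < γ := by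
    apply lt_min
    · positivity
    · exact mul_pos (by linarith) (Real.rpow_pos_of_pos (hpos N) _)
  -- step inequality
  have hstep : ∀ k, N ≤ k → r k ^ (1-α) + γ ≤ r (k+1) ^ (1-α) := by
    intro k hk
    have ha : 0 < r (k+1) := hpos _
    have hb : 0 < r k := hpos _
    have hab : r (k+1) ≤ r k := hmono k
    by_cases hcase : r k / 2 ≤ r (k+1)
    · -- a ≥ b/2 : use MVT inequality and recurrence
      have hmvt := aux_mvt ha hab hα
      have hrec' := hrec k hk
      have h2 : 2 ^ (-α) * r k ^ α ≤ r (k+1) ^ α := by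
        have h2' : (r k / 2) ^ α ≤ r (k+1) ^ α :=
          Real.rpow_le_rpow (by positivity) hcase (by linarith)
        calc 2 ^ (-α) * r k ^ α = (r k / 2) ^ α := by
              rw [Real.div_rpow hb.le (by norm_num : (0:ℝ) ≤ 2),
                Real.rpow_neg (by norm_num : (0:ℝ) ≤ 2)]
              ring
          _ ≤ _ := h2'
      have hba : 0 ≤ r k ^ (-α) := (Real.rpow_pos_of_pos hb (-α)).le
      have h3 : r k ^ (-α) * r k ^ α = 1 := by
        rw [← Real.rpow_add hb]; simp
      have h4 : (α - 1) * 2 ^ (-α) / β ≤ (α - 1) * r k ^ (-α) * (r k - r (k+1)) := by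
        have h6 : r k ^ (-α) * r (k+1) ^ α / β ≤ r k ^ (-α) * (r k - r (k+1)) := by
          rw [div_le_iff₀ hβ]
          calc r k ^ (-α) * r (k+1) ^ α ≤ r k ^ (-α) * (β * (r k - r (k+1))) :=
                mul_le_mul_of_nonneg_left hrec' hba
            _ = r k ^ (-α) * (r k - r (k+1)) * β := by ring
        have h7 : 2 ^ (-α) ≤ r k ^ (-α) * r (k+1) ^ α := by
          calc (2:ℝ) ^ (-α) = r k ^ (-α) * (2 ^ (-α) * r k ^ α) := by
                rw [show r k ^ (-α) * (2 ^ (-α) * r k ^ α)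
                    = 2 ^ (-α) * (r k ^ (-α) * r k ^ α) by ring, h3]; ring
            _ ≤ _ := mul_le_mul_of_nonneg_left h2 hba
        calc (α - 1) * 2 ^ (-α) / β ≤ (α - 1) * (r k ^ (-α) * r (k+1) ^ α) / β := by
              exact (div_le_div_iff_of_pos_right hβ).2 (mul_le_mul_of_nonneg_left h7 hα1.le)
          _ = (α - 1) * (r k ^ (-α) * r (k+1) ^ α / β) := by ring
          _ ≤ (α - 1) * (r k ^ (-α) * (r k - r (k+1))) :=
              mul_le_mul_of_nonneg_left h6 hα1.le
          _ = (α - 1) * r k ^ (-α) * (r k - r (k+1)) := by ring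
      have hγle : γ ≤ (α-1) * 2 ^ (-α) / β := min_le_left _ _
      linarith [hmvt]
    · -- a < b/2 : big drop
      push_neg at hcase
      have h1 : (r k / 2) ^ (1-α) ≤ r (k+1) ^ (1-α) :=
        Real.rpow_le_rpow_of_nonpos ha hcase.le (by linarith)
      have h2 : (r k / 2) ^ (1-α) = 2 ^ (α-1) * r k ^ (1-α) := by
        rw [Real.div_rpow hb.le (by norm_num : (0:ℝ) ≤ 2)]
        rw [show (α:ℝ) - 1 = -(1-α) by ring, Real.rpow_neg (by norm_num : (0:ℝ) ≤ 2)]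
        field_simp
      have hN : r N ^ (1-α) ≤ r k ^ (1-α) :=
        Real.rpow_le_rpow_of_nonpos hb (hmono' N k hk) (by linarith)
      have hγle : γ ≤ (2 ^ (α-1) - 1) * r N ^ (1-α) := min_le_right _ _
      nlinarith [Real.rpow_pos_of_pos hb (1-α), h2a1]
  -- telescoping
  have htel : ∀ k, N ≤ k → r N ^ (1-α) + γ * ((k:ℝ) - N) ≤ r k ^ (1-α) := by
    intro k hk
    induction k, hk using Nat.le_induction with
    | base => simp
    | succ n hn ih =>
      have := hstep n hn
      push_cast
      push_cast at ih
      linarith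
  -- conclusion
  refine ⟨(γ/2) ^ (1/(1-α)), Real.rpow_pos_of_pos (by linarith) _, 2*N+1, ?_⟩
  intro k hk
  have hkpos : (0:ℝ) < k := by
    have : 1 ≤ k := by omega
    exact_mod_cast Nat.lt_of_lt_of_le Nat.zero_lt_one this
  have hkN : N ≤ k := by omega
  have htel' := htel k hkN
  have hsN : 0 < r N ^ (1-α) := Real.rpow_pos_of_pos (hpos N) _
  have hhalf : γ / 2 * k ≤ γ * ((k:ℝ) - N) := by
    have h2k : (2*N+1 : ℝ) ≤ k := by exact_mod_cast hk
    nlinarith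
  have hlow : γ / 2 * k ≤ r k ^ (1-α) := by linarith
  have hγk : 0 < γ / 2 * k := by positivity
  have hne : (1:ℝ) - α ≠ 0 := by linarith
  have hid : (r k ^ (1-α)) ^ (1/(1-α)) = r k := by
    rw [← Real.rpow_mul (hpos k).le, mul_one_div, div_self hne, Real.rpow_one]
  have hanti : (r k ^ (1-α)) ^ (1/(1-α)) ≤ (γ / 2 * k) ^ (1/(1-α)) := by
    apply Real.rpow_le_rpow_of_nonpos hγk hlow
    apply le_of_lt
    apply div_neg_of_pos_of_neg one_pos
    linarith
  calc r k = (r k ^ (1-α)) ^ (1/(1-α)) := hid.symm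
    _ ≤ (γ / 2 * k) ^ (1/(1-α)) := hanti
    _ = (γ/2) ^ (1/(1-α)) * (k:ℝ) ^ (1/(1-α)) :=
        Real.mul_rpow (by linarith) hkpos.le
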